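/- Let l ≥ 2. Then det P = 2 and det P̃ = 2; in particular P and P̃ are invertible over any field of characteristic different from 2. -/
import Mathlib


/-! Matrices `A`, `P`, `P̃` from the paper (1-based index conventions).

`M = binom(l,2)`, `N = binom(l+1,2) = M + l`.  Rows `1, …, M` are indexed by pairs:
row `r` lies in block `blk r` (the stack of the matrices `C₁, …, C_{l-1}`), at position
`pos r` within that block. -/

/-- `triang i = i*(i+1)/2`, the number of rows of the vertical stack `C₁, …, C_i`. -/
def triang (i : ℕ) : ℕ := i * (i + 1) / 2

/-- For a (1-based) row index `r`, the index `i` of the block `C_i` containing row `r` of the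
vertical stack `C₁, …`: the least `i` with `r ≤ triang i`. -/
def blk (r : ℕ) : ℕ :=
  Nat.find (⟨2 * r, by
    have h2 : 2 * r * (2 * r + 1) / 2 = r * (2 * r + 1) := by
      rw [mul_assoc, Nat.mul_div_cancel_left _ (by norm_num)]
    rw [triang, h2]
    exact Nat.le_mul_of_pos_right r (by positivity)⟩ : ∃ i, r ≤ triang i)

/-- The (1-based) position of row `r` inside its block `C_(blk r)`. -/
def pos (r : ℕ) : ℕ := r - triang (blk r - 1)

/-- The `k × (l−1)` matrix `C_k` (1-based entries): `(C_k)_{h,h} = (C_k)_{h,k} = 1` for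
`1 ≤ h < k`, `(C_k)_{k,k} = 2`, and `0` otherwise.  (The matrix `D` of the paper is `C_l`,
viewed as an `l × l` matrix.) -/
def Cent (k h j : ℕ) : ℤ :=
  if h = k ∧ j = k then 2 else if h < k ∧ (j = h ∨ j = k) then 1 else 0

/-- The entry of `A` in (1-based) row `i`, column `j`; blocks of sizes `(M, l-1, 1)`. -/
def Aent (l i j : ℕ) : ℤ :=
  if i ≤ Nat.choose l 2 then
    if j ≤ Nat.choose l 2 then (if i = j then 4 else 0)
    else if j ≤ Nat.choose l 2 + (l - 1) then
      (-4) * Cent (blk i) (pos i) (j - Nat.choose l 2)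
    else 2
  else if i ≤ Nat.choose l 2 + (l - 1) then
    if j ≤ Nat.choose l 2 then 4 * Cent (blk j) (pos j) (i - Nat.choose l 2)
    else if j ≤ Nat.choose l 2 + (l - 1) then (if i = j then 4 else -4)
    else -6
  else
    if j ≤ Nat.choose l 2 then 2 else 6

/-- The matrix `A`, an `N × N` integer matrix with `N = binom(l+1,2)`. -/
def Amat (l : ℕ) : Matrix (Fin (Nat.choose (l + 1) 2)) (Fin (Nat.choose (l + 1) 2)) ℤ :=
  fun i j => Aent l (i.1 + 1) (j.1 + 1)

/-- The entry of `P` in (1-based) row `i`, column `j`; blocks of sizes `(M, l)`: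
top-left `I_M`, bottom-left `0`, top-right the stack of `C₁, …, C_{l-1}` with an extra
last column of ones, bottom-right `D = C_l`. -/
def Pent (l i j : ℕ) : ℤ :=
  if i ≤ Nat.choose l 2 then
    if j ≤ Nat.choose l 2 then (if i = j then 1 else 0)
    else if j ≤ Nat.choose l 2 + (l - 1) then Cent (blk i) (pos i) (j - Nat.choose l 2)
    else 1
  else
    if j ≤ Nat.choose l 2 then 0
    else Cent l (i - Nat.choose l 2) (j - Nat.choose l 2)

/-- The matrix `P`. -/
def Pmat (l : ℕ) : Matrix (Fin (Nat.choose (l + 1) 2)) (Fin (Nat.choose (l + 1) 2)) ℤ :=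
  fun i j => Pent l (i.1 + 1) (j.1 + 1)

/-- The entry of `P̃` in (1-based) row `i`, column `j`:
`P̃_{i,i} = P_{i,i}`; `P̃_{N,j} = 1` for `j ≤ M`; and `P̃_{i,j} = −P_{j,i}` otherwise. -/
def Ptent (l i j : ℕ) : ℤ :=
  if i = j then Pent l i i
  else if i = Nat.choose (l + 1) 2 ∧ j ≤ Nat.choose l 2 then 1
  else -(Pent l j i)

/-- The matrix `P̃`. -/
def Ptmat (l : ℕ) : Matrix (Fin (Nat.choose (l + 1) 2)) (Fin (Nat.choose (l + 1) 2)) ℤ :=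
  fun i j => Ptent l (i.1 + 1) (j.1 + 1)

lemma cent_lt (k a b : ℕ) (h : b < a) : Cent k a b = 0 := by
  unfold Cent; split_ifs <;> omega

lemma pent_lt (l i j : ℕ) (h : j < i) : Pent l i j = 0 := by
  unfold Pent
  split_ifs <;> first | rfl | omega | (apply cent_lt; omega)

lemma pent_diag (l : ℕ) (hl : 2 ≤ l) (r : ℕ) (_h1 : 1 ≤ r) (h2 : r ≤ l.choose 2 + l) :
    Pent l r r = if r = l.choose 2 + l then 2 else 1 := by
  unfold Pent Cent
  split_ifs <;> omega

lemma prod_diag (l : ℕ) (hl : 2 ≤ l) (hN : (l+1).choose 2 = l.choose 2 + l)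
    (f : Fin ((l+1).choose 2) → ℤ) (hf : ∀ i, f i = Pent l (i.1 + 1) (i.1 + 1)) :
    ∏ i, f i = 2 := by
  have hNpos : 0 < (l+1).choose 2 := by omega
  set t : Fin ((l+1).choose 2) := ⟨l.choose 2 + l - 1, by omega⟩ with ht
  calc (∏ i, f i) = ∏ i, (if i = t then (2:ℤ) else 1) := by
        refine Finset.prod_congr rfl fun i _ => ?_
        rw [hf i, pent_diag l hl (i.1 + 1) (by omega) (by have := i.isLt; omega)]
        refine if_congr ?_ rfl rfl
        rw [Fin.ext_iff]
        show (i:ℕ) + 1 = l.choose 2 + l ↔ (i:ℕ) = l.choose 2 + l - 1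
        omega
    _ = 2 := by
        rw [Finset.prod_ite_eq' Finset.univ t (fun _ => (2:ℤ)), if_pos (Finset.mem_univ t)]

/-- For `l ≥ 2`, `det P = 2` and `det P̃ = 2`; in particular, `P` and `P̃` are invertible
over any field of characteristic different from `2`. -/
theorem det_pmat_eq_two (l : ℕ) (hl : 2 ≤ l) :
    (Pmat l).det = 2 ∧ (Ptmat l).det = 2 ∧
    ∀ (K : Type*) [Field K], ringChar K ≠ 2 →
      IsUnit ((Pmat l).map (Int.cast : ℤ → K)) ∧
      IsUnit ((Ptmat l).map (Int.cast : ℤ → K)) := by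
  have hN : (l+1).choose 2 = l.choose 2 + l := by
    rw [Nat.choose_succ_succ l 1, Nat.choose_one_right, Nat.add_comm]
  have hP : (Pmat l).BlockTriangular id := by
    intro i j hij
    have hj : (j:ℕ) < i := Fin.lt_def.mp hij
    exact pent_lt l _ _ (by omega)
  have hPdet : (Pmat l).det = 2 := by
    rw [Matrix.det_of_upperTriangular hP]
    exact prod_diag l hl hN _ fun i => rfl
  have hPt : (Matrix.transpose (Ptmat l)).BlockTriangular id := by
    intro i j hij
    have hj : (j:ℕ) < i := Fin.lt_def.mp hij
    show Ptent l (j.1 + 1) (i.1 + 1) = 0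
    unfold Ptent
    rw [if_neg (by omega), if_neg (by rintro ⟨h1, h2⟩; have := i.isLt; omega),
      pent_lt l _ _ (by omega), neg_zero]
  have hPtdet : (Ptmat l).det = 2 := by
    rw [← Matrix.det_transpose, Matrix.det_of_upperTriangular hPt]
    refine prod_diag l hl hN _ fun i => ?_
    show Ptent l (i.1 + 1) (i.1 + 1) = _
    unfold Ptent
    rw [if_pos rfl]
  refine ⟨hPdet, hPtdet, fun K _ hchar => ?_⟩
  have h2 : (2:K) ≠ 0 := Ring.two_ne_zero hchar
  have key : ∀ (Q : Matrix (Fin ((l+1).choose 2)) (Fin ((l+1).choose 2)) ℤ),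
      Q.det = 2 → IsUnit (Q.map (Int.cast : ℤ → K)) := by
    intro Q hQ
    rw [Matrix.isUnit_iff_isUnit_det]
    have e1 : (Q.map (Int.cast : ℤ → K)).det = ((Q.det : ℤ) : K) :=
      (RingHom.map_det (Int.castRingHom K) Q).symm
    rw [e1, hQ]
    exact isUnit_iff_ne_zero.mpr (by exact_mod_cast h2)
  exact ⟨key _ hPdet, key _ hPtdet⟩
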